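/- Let g : 𝔻 → ℂ be a univalent (injective holomorphic) map with g(0) = 0 and g'(0) = c ≠ 0. For every ε > 0 there exists r ∈ (0, 1/2) and a (1+ε)-quasiconformal homeomorphism f : 𝔻 → g(𝔻) such that f(z) = cz for all |z| ≤ r and f(z) = g(z) for all z ∈ 𝔻 with |z| ≥ 2r. -/

import Mathlib

open Set Metric Complex

/-- The `∂f` part `a` of an ℝ-linear map `L : ℂ → ℂ`, `L(z) = a z + b z̄`. -/
noncomputable def wirtA (L : ℂ →L[ℝ] ℂ) : ℂ := (L 1 - Complex.I * L Complex.I) / 2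

/-- The `∂̄f` part `b` of an ℝ-linear map `L : ℂ → ℂ`, `L(z) = a z + b z̄`. -/
noncomputable def wirtB (L : ℂ →L[ℝ] ℂ) : ℂ := (L 1 + Complex.I * L Complex.I) / 2

/-- `f` is `K`-quasiconformal on the open set `s` (differentiable version):
`|∂̄f| ≤ k |∂f|` on `s` with `k = (K-1)/(K+1)`. -/
def IsQCOn (K : ℝ) (f : ℂ → ℂ) (s : Set ℂ) : Prop :=
  (∀ z ∈ s, DifferentiableAt ℝ f z) ∧
    ∀ z ∈ s, ‖wirtB (fderiv ℝ f z)‖ ≤ (K - 1) / (K + 1) * ‖wirtA (fderiv ℝ f z)‖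

lemma wirtA_id : wirtA (ContinuousLinearMap.id ℝ ℂ) = 1 := by
  simp [wirtA]

lemma wirtB_id : wirtB (ContinuousLinearMap.id ℝ ℂ) = 0 := by
  simp [wirtB]

lemma wirtA_add (L M : ℂ →L[ℝ] ℂ) : wirtA (L + M) = wirtA L + wirtA M := by
  simp [wirtA]; ring

lemma wirtB_add (L M : ℂ →L[ℝ] ℂ) : wirtB (L + M) = wirtB L + wirtB M := by
  simp [wirtB]; ring

lemma norm_wirtA_le (L : ℂ →L[ℝ] ℂ) : ‖wirtA L‖ ≤ ‖L‖ := by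
  have h1 : ‖L 1‖ ≤ ‖L‖ := by simpa using L.le_opNorm 1
  have h2 : ‖L Complex.I‖ ≤ ‖L‖ := by
    simpa [Complex.norm_I] using L.le_opNorm Complex.I
  calc ‖wirtA L‖ ≤ (‖L 1‖ + ‖Complex.I * L Complex.I‖) / 2 := by
        rw [wirtA]; rw [norm_div]
        gcongr
        · exact norm_sub_le _ _
        · norm_num
    _ ≤ (‖L‖ + ‖L‖) / 2 := by
        rw [norm_mul, Complex.norm_I, one_mul]; gcongr
    _ = ‖L‖ := by ring

lemma norm_wirtB_le (L : ℂ →L[ℝ] ℂ) : ‖wirtB L‖ ≤ ‖L‖ := by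
  have h1 : ‖L 1‖ ≤ ‖L‖ := by simpa using L.le_opNorm 1
  have h2 : ‖L Complex.I‖ ≤ ‖L‖ := by
    simpa [Complex.norm_I] using L.le_opNorm Complex.I
  calc ‖wirtB L‖ ≤ (‖L 1‖ + ‖Complex.I * L Complex.I‖) / 2 := by
        rw [wirtB]; rw [norm_div]
        gcongr
        · exact norm_add_le _ _
        · norm_num
    _ ≤ (‖L‖ + ‖L‖) / 2 := by
        rw [norm_mul, Complex.norm_I, one_mul]; gcongr
    _ = ‖L‖ := by ring

lemma wirtA_comp (a : ℂ) (L M : ℂ →L[ℝ] ℂ) (hL : ∀ x, L x = a * x) :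
    wirtA (L.comp M) = a * wirtA M := by
  simp only [wirtA, ContinuousLinearMap.comp_apply, hL]; ring

lemma wirtB_comp (a : ℂ) (L M : ℂ →L[ℝ] ℂ) (hL : ∀ x, L x = a * x) :
    wirtB (L.comp M) = a * wirtB M := by
  simp only [wirtB, ContinuousLinearMap.comp_apply, hL]; ring

lemma exists_bound_deriv_smoothTransition :
    ∃ B : ℝ, 0 ≤ B ∧ ∀ t : ℝ, ‖deriv Real.smoothTransition t‖ ≤ B := by
  have hcont : Continuous (deriv Real.smoothTransition) :=
    (Real.smoothTransition.contDiff (n := 1)).continuous_deriv le_rfl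
  obtain ⟨B, hB⟩ := (isCompact_Icc (a := (0:ℝ)) (b := 1)).exists_bound_of_continuousOn
    hcont.continuousOn
  refine ⟨max B 0, le_max_right _ _, fun t => ?_⟩
  rcases le_or_gt t 0 with ht | ht
  · rcases lt_or_eq_of_le ht with ht | ht
    · have hev : Real.smoothTransition =ᶠ[nhds t] fun _ => (0:ℝ) := by
        filter_upwards [Iio_mem_nhds ht] with s hs
        exact Real.smoothTransition.zero_of_nonpos (le_of_lt hs)
      rw [hev.deriv_eq, deriv_const]
      simp
    · subst ht
      exact le_trans (hB 0 (by norm_num)) (le_max_left _ _)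
  · rcases le_or_gt t 1 with ht1 | ht1
    · exact le_trans (hB t ⟨le_of_lt ht, ht1⟩) (le_max_left _ _)
    · have hev : Real.smoothTransition =ᶠ[nhds t] fun _ => (1:ℝ) := by
        filter_upwards [Ioi_mem_nhds ht1] with s hs
        exact Real.smoothTransition.one_of_one_le (le_of_lt hs)
      rw [hev.deriv_eq, deriv_const]
      simp

lemma exists_norm_hasFDerivAt {z : ℂ} (hz : z ≠ 0) :
    ∃ N : ℂ →L[ℝ] ℝ, HasFDerivAt (fun w : ℂ => ‖w‖) N z ∧ ‖N‖ ≤ 1 := by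
  have hd : DifferentiableAt ℝ (fun w : ℂ => ‖w‖) z :=
    ((contDiffAt_norm ℂ (n := 1) hz).differentiableAt one_ne_zero)
  refine ⟨fderiv ℝ (fun w : ℂ => ‖w‖) z, hd.hasFDerivAt, ?_⟩
  have := norm_fderiv_le_of_lipschitz ℝ (x₀ := z) lipschitzWith_one_norm
  simpa using this

set_option maxHeartbeats 2000000 in
/-- **Interpolation lemma.** Let `g : 𝔻 → ℂ` be univalent with `g(0) = 0`, `g'(0) = c ≠ 0`.
For every `ε > 0` there are `r ∈ (0, 1/2)` and a `(1+ε)`-quasiconformal homeomorphism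
`f : 𝔻 → g(𝔻)` with `f(z) = cz` on `|z| ≤ r` and `f = g` on `|z| ≥ 2r`. -/
theorem interpolation_lemma
    (g : ℂ → ℂ) (c : ℂ)
    (hdiff : DifferentiableOn ℂ g (ball 0 1))
    (hinj : Set.InjOn g (ball 0 1))
    (h0 : g 0 = 0) (hc : deriv g 0 = c) (hc0 : c ≠ 0) :
    ∀ ε > (0:ℝ), ∃ r ∈ Set.Ioo (0:ℝ) (1/2), ∃ f : ℂ → ℂ,
      ContinuousOn f (ball 0 1) ∧
      Set.InjOn f (ball 0 1) ∧
      f '' ball 0 1 = g '' ball 0 1 ∧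
      IsQCOn (1 + ε) f (ball 0 1) ∧
      (∀ z : ℂ, ‖z‖ ≤ r → f z = c * z) ∧
      (∀ z ∈ ball (0:ℂ) 1, 2 * r ≤ ‖z‖ → f z = g z) := by
  intro ε hε
  -- constants
  set k : ℝ := ε / (ε + 2) with hk_def
  have hk : 0 < k := div_pos hε (by linarith)
  set lam : ℝ := min (k / (1 + k)) 2⁻¹ with hlam_def
  have hlam_pos : 0 < lam := lt_min (div_pos hk (by linarith)) (by norm_num)
  have hlam_half : lam ≤ 2⁻¹ := min_le_right _ _
  have hlam_lt1 : lam < 1 := lt_of_le_of_lt hlam_half (by norm_num)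
  have hlam_k : lam ≤ k * (1 - lam) := by
    have h1 : lam ≤ k / (1 + k) := min_le_left _ _
    have h2 : lam * (1 + k) ≤ k := (le_div_iff₀ (by linarith)).mp h1
    nlinarith
  obtain ⟨B, hB0, hB⟩ := exists_bound_deriv_smoothTransition
  set δ : ℝ := lam / (1 + 2*B) with hδ_def
  have h12B : (0:ℝ) < 1 + 2*B := by linarith
  have hδ_pos : 0 < δ := div_pos hlam_pos h12B
  have hδ_lam : δ * (1 + 2*B) = lam := div_mul_cancel₀ _ (ne_of_gt h12B)
  have hδ_le : δ ≤ lam := by nlinarith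
  have hδ_half : δ ≤ 2⁻¹ := hδ_le.trans hlam_half
  -- derivative setup
  have hball : ball (0:ℂ) 1 ∈ nhds (0:ℂ) := isOpen_ball.mem_nhds (by simp)
  have hgc : ContDiffAt ℂ 1 g 0 := (hdiff.contDiffOn isOpen_ball).contDiffAt hball
  set e : ℂ ≃L[ℂ] ℂ := ContinuousLinearEquiv.unitsEquivAut ℂ (Units.mk0 c hc0) with he_def
  have he_apply : ∀ x : ℂ, e x = x * c := fun x => rfl
  have hgd : DifferentiableAt ℂ g 0 := hdiff.differentiableAt hball
  have hf' : HasFDerivAt g (e : ℂ →L[ℂ] ℂ) 0 := by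
    have h1 : HasDerivAt g c 0 := by simpa [hc] using hgd.hasDerivAt
    have h2 := h1.hasFDerivAt
    have h3 : (e : ℂ →L[ℂ] ℂ) = ContinuousLinearMap.smulRight (1 : ℂ →L[ℂ] ℂ) c := by
      apply ContinuousLinearMap.ext_ring
      simp [he_apply]
    rw [h3]; exact h2
  have hs := hgc.hasStrictFDerivAt' hf' one_ne_zero
  obtain ⟨h, h00, hrinv, hch, hDh0⟩ : ∃ h : ℂ → ℂ, h 0 = 0 ∧
      (∀ᶠ y in nhds (0:ℂ), g (h y) = y) ∧ ContDiffAt ℝ 1 h 0 ∧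
      fderiv ℝ h 0 = (e.symm : ℂ →L[ℂ] ℂ).restrictScalars ℝ := by
    refine ⟨hs.localInverse g e 0, ?_, ?_, ?_, ?_⟩
    · have := hs.localInverse_apply_image; rwa [h0] at this
    · have := hs.eventually_right_inverse; rwa [h0] at this
    · have h1 := hgc.to_localInverse hf' one_ne_zero
      rw [h0] at h1
      exact (h1 : ContDiffAt ℂ 1 (hs.localInverse g e 0) 0).restrict_scalars ℝ
    · have h1 := hs.to_localInverse
      rw [h0] at h1
      exact (h1.hasFDerivAt.restrictScalars ℝ).fderiv
  -- C¹ neighborhood of 0 for h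
  obtain ⟨t, ht_open, ht0, htd, htc⟩ : ∃ t : Set ℂ, IsOpen t ∧ (0:ℂ) ∈ t ∧
      (∀ y ∈ t, DifferentiableAt ℝ h y) ∧ ContinuousOn (fderiv ℝ h) t := by
    obtain ⟨u, hu, hcd⟩ := hch.contDiffOn le_rfl (by simp)
    refine ⟨interior u, isOpen_interior, mem_interior_iff_mem_nhds.2 hu, ?_, ?_⟩
    · intro y hy
      exact ((hcd.mono interior_subset).differentiableOn one_ne_zero).differentiableAt
        (isOpen_interior.mem_nhds hy)
    · exact (hcd.mono interior_subset).continuousOn_fderiv_of_isOpen isOpen_interior le_rfl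
  set mc : ℂ →L[ℝ] ℂ := (e : ℂ →L[ℂ] ℂ).restrictScalars ℝ with hmc_def
  have hmc_apply : ∀ x : ℂ, mc x = x * c := fun x => rfl
  have hmc_norm : ‖mc‖ ≤ ‖c‖ := by
    refine ContinuousLinearMap.opNorm_le_bound _ (norm_nonneg c) fun x => ?_
    rw [hmc_apply, norm_mul, mul_comm]
  have hcomp_id : ((e.symm : ℂ →L[ℂ] ℂ).restrictScalars ℝ).comp mc
      = ContinuousLinearMap.id ℝ ℂ := by
    apply ContinuousLinearMap.ext
    intro x
    simp [hmc_def]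
  -- choose ρ
  set δ' : ℝ := δ / (‖c‖ + 1) with hδ'_def
  have hδ'_pos : 0 < δ' := div_pos hδ_pos (by positivity)
  obtain ⟨ρ, hρ_pos, hρ⟩ : ∃ ρ > 0, ∀ y : ℂ, ‖y‖ < ρ →
      y ∈ t ∧ ‖fderiv ℝ h y - fderiv ℝ h 0‖ ≤ δ' ∧ g (h y) = y := by
    have hcont0 : ContinuousAt (fderiv ℝ h) 0 := htc.continuousAt (ht_open.mem_nhds ht0)
    have h1 : ∀ᶠ y in nhds (0:ℂ), ‖fderiv ℝ h y - fderiv ℝ h 0‖ < δ' := by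
      have h2 : Filter.Tendsto (fun y => ‖fderiv ℝ h y - fderiv ℝ h 0‖) (nhds 0)
          (nhds ‖fderiv ℝ h 0 - fderiv ℝ h 0‖) := ((hcont0.sub continuousAt_const).norm)
      rw [sub_self, norm_zero] at h2
      exact h2.eventually_lt_const hδ'_pos
    have hall : ∀ᶠ y in nhds (0:ℂ), y ∈ t ∧ ‖fderiv ℝ h y - fderiv ℝ h 0‖ ≤ δ' ∧
        g (h y) = y := by
      filter_upwards [ht_open.mem_nhds ht0, h1, hrinv] with y hy1 hy2 hy3
      exact ⟨hy1, le_of_lt hy2, hy3⟩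
    rcases Metric.eventually_nhds_iff_ball.mp hall with ⟨ρ, hρpos, hρ'⟩
    exact ⟨ρ, hρpos, fun y hy => hρ' y (mem_ball_zero_iff.mpr hy)⟩
  -- choose r
  set r : ℝ := min (ρ / (1 + 3 * ‖c‖)) 4⁻¹ with hr_def
  have hnc : (0:ℝ) ≤ ‖c‖ := norm_nonneg c
  have hr_pos : 0 < r := lt_min (div_pos hρ_pos (by linarith)) (by norm_num)
  have hr_quarter : r ≤ 4⁻¹ := min_le_right _ _
  have hr_half : r < 1/2 := lt_of_le_of_lt hr_quarter (by norm_num)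
  have hr_ρ : r ≤ ρ / (1 + 3 * ‖c‖) := min_le_left _ _
  have hr2ρ : ∀ z : ℂ, ‖z‖ ≤ 2*r → ‖c*z‖ < ρ := by
    intro z hz
    have h1 : r * (1 + 3 * ‖c‖) ≤ ρ := by
      rw [← le_div_iff₀ (by linarith)]; exact hr_ρ
    have h2 : ‖c*z‖ = ‖c‖ * ‖z‖ := norm_mul c z
    nlinarith [norm_nonneg z, hr_pos]
  -- the bump function and perturbation
  set T := Real.smoothTransition with hT_def
  set φ : ℂ → ℝ := fun z => T ((2*r - ‖z‖)/r) with hφ_def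
  set ψ : ℂ → ℂ := fun z => h (c*z) - z with hψ_def
  set u : ℂ → ℂ := fun z => φ z • ψ z with hu_def
  set η : ℂ → ℂ := fun z => z + u z with hη_def
  have hφ_nonneg : ∀ z, 0 ≤ φ z := fun z => Real.smoothTransition.nonneg _
  have hφ_le_one : ∀ z, φ z ≤ 1 := fun z => Real.smoothTransition.le_one _
  have hφ1 : ∀ z : ℂ, ‖z‖ ≤ r → φ z = 1 := by
    intro z hz
    exact Real.smoothTransition.one_of_one_le (by rw [le_div_iff₀ hr_pos]; linarith)
  have hφ0 : ∀ z : ℂ, 2*r ≤ ‖z‖ → φ z = 0 := by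
    intro z hz
    exact Real.smoothTransition.zero_of_nonpos
      (div_nonpos_of_nonpos_of_nonneg (by linarith) hr_pos.le)
  have hψ0 : ψ 0 = 0 := by simp [hψ_def, h00]
  set Dψ : ℂ → (ℂ →L[ℝ] ℂ) :=
    fun z => (fderiv ℝ h (c*z)).comp mc - ContinuousLinearMap.id ℝ ℂ with hDψ_def
  have hψd : ∀ z : ℂ, ‖z‖ ≤ 2*r → HasFDerivAt ψ (Dψ z) z := by
    intro z hz
    have hmem := hρ (c*z) (hr2ρ z hz)
    have hh : HasFDerivAt h (fderiv ℝ h (c*z)) (c*z) := (htd _ hmem.1).hasFDerivAt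
    have hlin : HasFDerivAt (fun w : ℂ => c*w) mc z := by
      have heq : (fun w : ℂ => c*w) = ⇑mc := funext fun w => by rw [hmc_apply]; ring
      rw [heq]; exact mc.hasFDerivAt
    have h1 : HasFDerivAt (fun w => h (c*w)) ((fderiv ℝ h (c*z)).comp mc) z :=
      hh.comp z hlin
    exact h1.sub (hasFDerivAt_id z)
  have hψd_norm : ∀ z : ℂ, ‖z‖ ≤ 2*r → ‖Dψ z‖ ≤ δ := by
    intro z hz
    have hmem := hρ (c*z) (hr2ρ z hz)
    have heq : Dψ z = ((fderiv ℝ h (c*z)) - fderiv ℝ h 0).comp mc := by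
      rw [ContinuousLinearMap.sub_comp, hDh0, hcomp_id]
    rw [heq]
    calc ‖((fderiv ℝ h (c*z)) - fderiv ℝ h 0).comp mc‖
        ≤ ‖(fderiv ℝ h (c*z)) - fderiv ℝ h 0‖ * ‖mc‖ :=
          ContinuousLinearMap.opNorm_comp_le _ _
      _ ≤ δ' * (‖c‖ + 1) := by
          apply mul_le_mul hmem.2.1 (hmc_norm.trans (by linarith)) (norm_nonneg _) hδ'_pos.le
      _ = δ := div_mul_cancel₀ _ (by positivity)
  have hψ_bound : ∀ z : ℂ, ‖z‖ ≤ 2*r → ‖ψ z‖ ≤ δ * ‖z‖ := by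
    intro z hz
    have hmvt := (convex_closedBall (0:ℂ) (2*r)).norm_image_sub_le_of_norm_hasFDerivWithin_le
      (f' := Dψ) (fun w hw => (hψd w (by simpa [mem_closedBall_zero_iff] using hw)).hasFDerivWithinAt)
      (fun w hw => hψd_norm w (by simpa [mem_closedBall_zero_iff] using hw))
      (mem_closedBall_zero_iff.mpr (by rw [norm_zero]; linarith)) (mem_closedBall_zero_iff.mpr hz)
    simpa [hψ0] using hmvt
  -- differentiability of φ
  have hφd : ∀ z : ℂ, ‖z‖ ≤ 2*r → ∃ Φ : ℂ →L[ℝ] ℝ, HasFDerivAt φ Φ z ∧ ‖Φ‖ ≤ B / r := by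
    intro z _
    rcases lt_or_ge ‖z‖ r with hzr | hzr
    · refine ⟨0, ?_, by rw [norm_zero]; exact div_nonneg hB0 hr_pos.le⟩
      have hev : φ =ᶠ[nhds z] fun _ => 1 := by
        filter_upwards [isOpen_ball.mem_nhds (mem_ball_zero_iff.mpr hzr)] with w hw
        exact hφ1 w (le_of_lt (mem_ball_zero_iff.mp hw))
      exact (hasFDerivAt_const (1:ℝ) z).congr_of_eventuallyEq hev
    · have hz0 : z ≠ 0 := by
        intro hzz
        rw [hzz, norm_zero] at hzr
        linarith
      obtain ⟨N, hN, hN1⟩ := exists_norm_hasFDerivAt hz0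
      have hA : HasFDerivAt (fun w : ℂ => (2*r - ‖w‖)/r) (r⁻¹ • ((0:ℂ →L[ℝ] ℝ) - N)) z := by
        have h1 := (hasFDerivAt_const (2*r) z).sub hN
        have h2 := h1.const_smul (r⁻¹ : ℝ)
        have heq : (fun w : ℂ => (2*r - ‖w‖)/r) = fun w : ℂ => r⁻¹ • (2*r - ‖w‖) := by
          funext w
          rw [smul_eq_mul, div_eq_inv_mul]
        rw [heq]; exact h2
      have hTd : HasDerivAt T (deriv T ((2*r - ‖z‖)/r)) ((2*r - ‖z‖)/r) :=
        ((Real.smoothTransition.contDiff (n := 1)).differentiable (by simp) _).hasDerivAt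
      refine ⟨deriv T ((2*r - ‖z‖)/r) • (r⁻¹ • ((0:ℂ →L[ℝ] ℝ) - N)), by have := hTd.comp_hasFDerivAt z hA; exact this, ?_⟩
      have hN' : ‖(0:ℂ →L[ℝ] ℝ) - N‖ ≤ 1 := by
        rw [zero_sub, norm_neg]; exact hN1
      have hrinv_nonneg : (0:ℝ) ≤ r⁻¹ := inv_nonneg.mpr hr_pos.le
      calc ‖deriv T ((2*r - ‖z‖)/r) • r⁻¹ • ((0:ℂ →L[ℝ] ℝ) - N)‖
          ≤ ‖deriv T ((2*r - ‖z‖)/r)‖ * ‖r⁻¹ • ((0:ℂ →L[ℝ] ℝ) - N)‖ :=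
            ContinuousLinearMap.opNorm_smul_le _ _
        _ ≤ ‖deriv T ((2*r - ‖z‖)/r)‖ * (‖(r⁻¹:ℝ)‖ * ‖(0:ℂ →L[ℝ] ℝ) - N‖) := by
            gcongr
            exact ContinuousLinearMap.opNorm_smul_le _ _
        _ ≤ B * (r⁻¹ * 1) := by
            have habs : ‖(r⁻¹:ℝ)‖ = r⁻¹ := by
              rw [Real.norm_eq_abs, _root_.abs_of_nonneg hrinv_nonneg]
            rw [habs]
            apply mul_le_mul (hB _) _ (mul_nonneg hrinv_nonneg (norm_nonneg _)) hB0
            exact mul_le_mul_of_nonneg_left hN' hrinv_nonneg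
        _ = B / r := by field_simp
  -- the derivative of u is everywhere small
  have hud : ∀ z : ℂ, ∃ U : ℂ →L[ℝ] ℂ, HasFDerivAt u U z ∧ ‖U‖ ≤ lam := by
    intro z
    rcases le_or_gt ‖z‖ (2*r) with hz | hz
    · obtain ⟨Φ, hΦ, hΦn⟩ := hφd z hz
      have hψz := hψd z hz
      refine ⟨φ z • Dψ z + Φ.smulRight (ψ z), hΦ.smul hψz, ?_⟩
      calc ‖φ z • Dψ z + Φ.smulRight (ψ z)‖
          ≤ ‖φ z • Dψ z‖ + ‖Φ.smulRight (ψ z)‖ := norm_add_le _ _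
        _ ≤ 1 * δ + (B/r) * (δ * (2*r)) := by
            apply add_le_add
            · calc ‖φ z • Dψ z‖ ≤ ‖φ z‖ * ‖Dψ z‖ := ContinuousLinearMap.opNorm_smul_le _ _
                _ ≤ 1 * δ := by
                    apply mul_le_mul _ (hψd_norm z hz) (norm_nonneg _) zero_le_one
                    rw [Real.norm_eq_abs, _root_.abs_of_nonneg (hφ_nonneg z)]
                    exact hφ_le_one z
            · rw [ContinuousLinearMap.norm_smulRight_apply]
              apply mul_le_mul hΦn _ (norm_nonneg _) (div_nonneg hB0 hr_pos.le)
              exact (hψ_bound z hz).trans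
                (mul_le_mul_of_nonneg_left hz hδ_pos.le)
        _ = δ * (1 + 2*B) := by
            have hr0 : r ≠ 0 := ne_of_gt hr_pos
            field_simp
        _ = lam := hδ_lam
    · refine ⟨0, ?_, by rw [norm_zero]; exact hlam_pos.le⟩
      have hev : u =ᶠ[nhds z] fun _ => 0 := by
        have hopen : IsOpen {w : ℂ | 2*r < ‖w‖} := isOpen_lt continuous_const continuous_norm
        filter_upwards [hopen.mem_nhds hz] with w hw
        simp [hu_def, hφ0 w (le_of_lt hw)]
      exact (hasFDerivAt_const (0:ℂ) z).congr_of_eventuallyEq hev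
  have hu_diff : ∀ z, DifferentiableAt ℝ u z := fun z => (hud z).choose_spec.1.differentiableAt
  have hu_fderiv : ∀ z, ‖fderiv ℝ u z‖ ≤ lam := by
    intro z
    obtain ⟨U, hU, hn⟩ := hud z
    rw [hU.fderiv]; exact hn
  have hu_lip : ∀ x y : ℂ, ‖u y - u x‖ ≤ lam * ‖y - x‖ := by
    intro x y
    exact convex_univ.norm_image_sub_le_of_norm_fderiv_le (fun w _ => hu_diff w)
      (fun w _ => hu_fderiv w) trivial trivial
  have hu0 : ∀ z : ℂ, 2*r ≤ ‖z‖ → u z = 0 := by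
    intro z hz; simp [hu_def, hφ0 z hz]
  have hu_small : ∀ z : ℂ, ‖z‖ ≤ 2*r → ‖u z‖ ≤ δ * ‖z‖ := by
    intro z hz
    calc ‖u z‖ ≤ ‖φ z‖ * ‖ψ z‖ := norm_smul_le _ _
      _ ≤ 1 * (δ * ‖z‖) := by
          apply mul_le_mul _ (hψ_bound z hz) (norm_nonneg _) zero_le_one
          rw [Real.norm_eq_abs, _root_.abs_of_nonneg (hφ_nonneg z)]; exact hφ_le_one z
      _ = δ * ‖z‖ := one_mul _
  -- η is injective
  have hη_inj : Function.Injective η := by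
    intro a b hab
    by_contra hne
    have key : a - b = u b - u a := by
      have : a + u a = b + u b := hab
      linear_combination this
    have h1 : ‖a - b‖ ≤ lam * ‖a - b‖ := by
      calc ‖a - b‖ = ‖u b - u a‖ := by rw [key]
        _ ≤ lam * ‖b - a‖ := hu_lip a b
        _ = lam * ‖a - b‖ := by rw [norm_sub_rev]
    have h2 : 0 < ‖a - b‖ := by
      rw [norm_pos_iff]; exact sub_ne_zero_of_ne hne
    nlinarith
  have hη_id : ∀ z : ℂ, 2*r ≤ ‖z‖ → η z = z := by
    intro z hz; simp [hη_def, hu0 z hz]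
  have hη_maps : ∀ z ∈ ball (0:ℂ) 1, η z ∈ ball (0:ℂ) 1 := by
    intro z hz
    rcases le_or_gt (2*r) ‖z‖ with h1 | h1
    · rw [hη_id z h1]; exact hz
    · rw [mem_ball_zero_iff]
      calc ‖η z‖ ≤ ‖z‖ + ‖u z‖ := norm_add_le _ _
        _ ≤ ‖z‖ + δ * ‖z‖ := by linarith [hu_small z h1.le]
        _ ≤ 2*r + 2⁻¹ * (2*r) := by nlinarith [norm_nonneg z]
        _ ≤ 2*4⁻¹ + 2⁻¹*(2*4⁻¹) := by nlinarith
        _ < 1 := by norm_num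
  have hη_surj : ∀ y ∈ ball (0:ℂ) 1, ∃ z ∈ ball (0:ℂ) 1, η z = y := by
    intro y hy
    set F : ℂ → ℂ := fun z => y - u z with hF_def
    have hlip : LipschitzWith lam.toNNReal F := by
      apply LipschitzWith.of_dist_le_mul
      intro a b
      have : F a - F b = u b - u a := by simp only [hF_def]; ring
      rw [dist_eq_norm, dist_eq_norm, this, Real.coe_toNNReal _ hlam_pos.le]
      calc ‖u b - u a‖ ≤ lam * ‖b - a‖ := hu_lip a b
        _ = lam * ‖a - b‖ := by rw [norm_sub_rev]
    have hcontr : ContractingWith lam.toNNReal F := by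
      refine ⟨?_, hlip⟩
      rw [← NNReal.coe_lt_coe, Real.coe_toNNReal _ hlam_pos.le]
      exact hlam_lt1
    set z := hcontr.fixedPoint F with hz_def
    have hfix : F z = z := hcontr.fixedPoint_isFixedPt
    have hηz : η z = y := by
      have : y - u z = z := hfix
      simp [hη_def]
      linear_combination -this
    refine ⟨z, ?_, hηz⟩
    rcases le_or_gt (2*r) ‖z‖ with h1 | h1
    · have : z = y := by rw [← hηz, hη_id z h1]
      rwa [this]
    · rw [mem_ball_zero_iff]
      calc ‖z‖ < 2*r := h1
        _ ≤ 2*4⁻¹ := by linarith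
        _ < 1 := by norm_num
  have hη_image : η '' ball (0:ℂ) 1 = ball 0 1 := by
    apply subset_antisymm
    · rintro w ⟨z, hz, rfl⟩; exact hη_maps z hz
    · intro y hy
      obtain ⟨z, hz, hηz⟩ := hη_surj y hy
      exact ⟨z, hz, hηz⟩
  have hη_diff : ∀ z, DifferentiableAt ℝ η z := fun z =>
    differentiableAt_fun_id.add (hu_diff z)
  have hDη : ∀ z, fderiv ℝ η z = ContinuousLinearMap.id ℝ ℂ + fderiv ℝ u z := by
    intro z
    rw [hη_def]
    rw [fderiv_fun_add differentiableAt_fun_id (hu_diff z), fderiv_id']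
  have hη_wirt : ∀ z, ‖wirtB (fderiv ℝ η z)‖ ≤ k * ‖wirtA (fderiv ℝ η z)‖ := by
    intro z
    rw [hDη z, wirtA_add, wirtB_add, wirtA_id, wirtB_id]
    set U := fderiv ℝ u z with hU_def
    have hU : ‖U‖ ≤ lam := hu_fderiv z
    have hA : ‖wirtA U‖ ≤ lam := (norm_wirtA_le U).trans hU
    have hBn : ‖wirtB U‖ ≤ lam := (norm_wirtB_le U).trans hU
    have h1 : 1 - lam ≤ ‖(1:ℂ) + wirtA U‖ := by
      have h3 : ‖(1:ℂ)‖ ≤ ‖(1:ℂ) + wirtA U‖ + ‖wirtA U‖ := by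
        calc ‖(1:ℂ)‖ = ‖((1:ℂ) + wirtA U) - wirtA U‖ := by congr 1; ring
          _ ≤ ‖(1:ℂ) + wirtA U‖ + ‖wirtA U‖ := norm_sub_le _ _
      rw [norm_one] at h3
      linarith
    calc ‖0 + wirtB U‖ = ‖wirtB U‖ := by rw [zero_add]
      _ ≤ lam := hBn
      _ ≤ k * (1 - lam) := hlam_k
      _ ≤ k * ‖1 + wirtA U‖ := by gcongr
  -- final assembly
  have hgη_diff : ∀ z ∈ ball (0:ℂ) 1, DifferentiableAt ℝ (fun w => g (η w)) z := by
    intro z hz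
    have hgz : DifferentiableAt ℂ g (η z) :=
      hdiff.differentiableAt (isOpen_ball.mem_nhds (hη_maps z hz))
    exact (hgz.restrictScalars ℝ).comp z (hη_diff z)
  have hgη_fderiv : ∀ z ∈ ball (0:ℂ) 1,
      fderiv ℝ (fun w => g (η w)) z = (fderiv ℝ g (η z)).comp (fderiv ℝ η z) := by
    intro z hz
    have hgz : DifferentiableAt ℂ g (η z) :=
      hdiff.differentiableAt (isOpen_ball.mem_nhds (hη_maps z hz))
    exact fderiv_comp z (hgz.restrictScalars ℝ) (hη_diff z)
  have hmul : ∀ z ∈ ball (0:ℂ) 1, ∀ x : ℂ, (fderiv ℝ g (η z)) x = deriv g (η z) * x := by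
    intro z hz x
    have hgz : DifferentiableAt ℂ g (η z) :=
      hdiff.differentiableAt (isOpen_ball.mem_nhds (hη_maps z hz))
    rw [hgz.fderiv_restrictScalars ℝ]
    show (fderiv ℂ g (η z)) x = deriv g (η z) * x
    have hxsmul : (fderiv ℂ g (η z)) x = x • (fderiv ℂ g (η z)) 1 := by
      rw [← ContinuousLinearMap.map_smul, smul_eq_mul, mul_one]
    rw [hxsmul, fderiv_apply_one_eq_deriv, smul_eq_mul, mul_comm]
  refine ⟨r, ⟨hr_pos, hr_half⟩, fun z => g (η z), ?_, ?_, ?_, ?_, ?_, ?_⟩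
  · -- continuity
    intro z hz
    exact (hgη_diff z hz).continuousAt.continuousWithinAt
  · -- injectivity
    intro a ha b hb hab
    exact hη_inj (hinj (hη_maps a ha) (hη_maps b hb) hab)
  · -- image
    show (fun z => g (η z)) '' ball 0 1 = g '' ball 0 1
    rw [show (fun z => g (η z)) = g ∘ η from rfl, image_comp, hη_image]
  · -- quasiconformality
    refine ⟨hgη_diff, ?_⟩
    intro z hz
    have hkK : (1 + ε - 1) / (1 + ε + 1) = k := by
      rw [hk_def]; congr 1 <;> ring
    rw [hgη_fderiv z hz, wirtA_comp (deriv g (η z)) _ _ (hmul z hz),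
      wirtB_comp (deriv g (η z)) _ _ (hmul z hz), norm_mul, norm_mul, hkK]
    have := hη_wirt z
    nlinarith [norm_nonneg (deriv g (η z)), norm_nonneg (wirtA (fderiv ℝ η z)), hk.le]
  · -- f = cz on small ball
    intro z hz
    have hφz := hφ1 z hz
    have hηz : η z = h (c*z) := by
      simp only [hη_def, hu_def, hφz, one_smul, hψ_def]
      ring
    show g (η z) = c * z
    rw [hηz]
    exact (hρ (c*z) (hr2ρ z (by linarith))).2.2
  · -- f = g outside
    intro z _ hz
    show g (η z) = g z
    rw [hη_id z hz]
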